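/- Satisfaction of a synonym OFD is not determined by pairs of tuples: there exists a relation instance I = {t1, t2, t3} over attributes {X, Y} and a sense assignment such that every two-element subset of I satisfies the OFD X → Y, but I itself does not satisfy X → Y. -/

import Mathlib

variable {α V S : Type*}

/-- A synonym OFD `X → Y` holds in instance `I` if for every equivalence class of tuples
agreeing on all attributes of `X` (represented by a tuple `t ∈ I`), and every attribute
`A ∈ Y`, there is a common sense in `names (u A)` for all tuples `u` of the class. -/
def OFDsat (names : V → Set S) (I : Set (α → V)) (X Y : Set α) : Prop :=
  ∀ t ∈ I, ∀ A ∈ Y, ∃ s : S, ∀ u ∈ I, (∀ a ∈ X, u a = t a) → s ∈ names (u A)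

/-- Synonym OFD satisfaction is not determined by pairs of tuples: every two-element
subset of `{t1, t2, t3}` satisfies `X → Y` (attributes `0, 1` of `Fin 2`), but the
three-tuple instance does not. -/
theorem not_pairwise :
    ∃ (V S : Type) (names : V → Set S) (t1 t2 t3 : Fin 2 → V),
      OFDsat names {t1, t2} {0} {1} ∧
      OFDsat names {t1, t3} {0} {1} ∧
      OFDsat names {t2, t3} {0} {1} ∧
      ¬ OFDsat names {t1, t2, t3} {0} {1} := by
  refine ⟨Fin 4, Fin 4, fun v => {s | (v = 1 ∧ (s = 0 ∨ s = 1)) ∨ (v = 2 ∧ (s = 1 ∨ s = 2))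
      ∨ (v = 3 ∧ (s = 0 ∨ s = 2))}, ![0, 1], ![0, 2], ![0, 3], ?_, ?_, ?_, ?_⟩
  · intro t ht A hA
    refine ⟨1, fun u hu _ => ?_⟩
    rcases hu with h | h <;> subst h <;> simp_all
  · intro t ht A hA
    refine ⟨0, fun u hu _ => ?_⟩
    rcases hu with h | h <;> subst h <;> simp_all
  · intro t ht A hA
    refine ⟨2, fun u hu _ => ?_⟩
    rcases hu with h | h <;> subst h <;> simp_all
  · intro h
    obtain ⟨s, hs⟩ := h ![0, 1] (by simp) 1 rfl
    have h1 := hs ![0, 1] (by simp) (by simp)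
    have h2 := hs ![0, 2] (by simp) (by simp)
    have h3 := hs ![0, 3] (by simp) (by simp)
    simp only [Set.mem_setOf_eq, Matrix.cons_val_one, Matrix.head_cons] at h1 h2 h3
    clear hs; revert s; decide
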